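/- The midpoint x* = (y1 + y2)/2 is a global maximizer of f over ℝ (i.e., f(x) ≤ f(x*) for all x ∈ ℝ) if and only if y2 − y1 ≤ √2·L. -/

import Mathlib

/-- `cosh θ ≥ 1 + θ²/2`. -/
lemma aux_one_add_sq_div_two_le_cosh (θ : ℝ) : 1 + θ ^ 2 / 2 ≤ Real.cosh θ := by
  rcases eq_or_ne θ 0 with h | h
  · simp [h]
  have h2 : Real.cosh θ = 1 + 2 * Real.sinh (θ / 2) ^ 2 := by
    have h1 := Real.cosh_two_mul (θ / 2)
    have h3 := Real.cosh_sq (θ / 2)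
    rw [show 2 * (θ / 2) = θ by ring] at h1
    rw [h1, h3]; ring
  rw [h2]
  have hs : (θ / 2) ^ 2 ≤ Real.sinh (θ / 2) ^ 2 := by
    rcases lt_or_gt_of_ne h with hneg | hpos
    · have h4 : -(θ / 2) < Real.sinh (-(θ / 2)) :=
        (Real.self_lt_sinh_iff).2 (by linarith)
      rw [Real.sinh_neg] at h4
      nlinarith
    · have h4 : θ / 2 < Real.sinh (θ / 2) :=
        (Real.self_lt_sinh_iff).2 (by linarith)
      nlinarith
  nlinarith

/-- `exp x < 1/(1-x)` for `0 < x < 1`. -/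
lemma aux_exp_lt_inv_one_sub {x : ℝ} (h0 : 0 < x) (h1 : x < 1) :
    Real.exp x < (1 - x)⁻¹ := by
  have h2 : (-x) + 1 < Real.exp (-x) := Real.add_one_lt_exp (by linarith)
  have hpos : 0 < Real.exp x := Real.exp_pos x
  have hmul : Real.exp (-x) * Real.exp x = 1 := by
    rw [← Real.exp_add]; simp
  rw [← one_div, lt_div_iff₀ (by linarith : (0:ℝ) < 1 - x)]
  nlinarith

theorem midpoint_global_max_iff
    (y1 y2 L σ0 σ : ℝ) (hy : y1 < y2) (hL : 0 < L) (hσ0 : 0 < σ0) (hσ : 0 < σ)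
    (f : ℝ → ℝ)
    (hf : ∀ x, f x = (σ0 ^ 4 / (σ0 ^ 2 + σ ^ 2)) *
      (Real.exp (-(x - y1) ^ 2 / L ^ 2) + Real.exp (-(x - y2) ^ 2 / L ^ 2))) :
    (∀ x : ℝ, f x ≤ f ((y1 + y2) / 2)) ↔ y2 - y1 ≤ Real.sqrt 2 * L := by
  obtain ⟨c, hcdef⟩ : ∃ c : ℝ, c = σ0 ^ 4 / (σ0 ^ 2 + σ ^ 2) := ⟨_, rfl⟩
  obtain ⟨m, hmdef⟩ : ∃ m : ℝ, m = (y1 + y2) / 2 := ⟨_, rfl⟩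
  obtain ⟨a, hadef⟩ : ∃ a : ℝ, a = (y2 - y1) / 2 := ⟨_, rfl⟩
  rw [← hmdef]
  have ha : 0 < a := by rw [hadef]; linarith
  have hL0 : L ≠ 0 := ne_of_gt hL
  have ha0 : a ≠ 0 := ne_of_gt ha
  have hL2 : (0:ℝ) < L ^ 2 := by positivity
  have hc : 0 < c := by rw [hcdef]; positivity
  -- key reformulation
  have key : ∀ u : ℝ, (f (m + u) ≤ f m ↔
      Real.cosh (2 * a * u / L ^ 2) ≤ Real.exp (u ^ 2 / L ^ 2)) := by
    intro u
    have e1 : f (m + u) = c * (2 * Real.exp (-(u ^ 2 + a ^ 2) / L ^ 2) *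
        Real.cosh (2 * a * u / L ^ 2)) := by
      rw [hf, ← hcdef]
      have h1 : m + u - y1 = u + a := by rw [hmdef, hadef]; ring
      have h2 : m + u - y2 = u - a := by rw [hmdef, hadef]; ring
      have hA : -(u + a) ^ 2 / L ^ 2 = -(u ^ 2 + a ^ 2) / L ^ 2 + -(2 * a * u / L ^ 2) := by
        ring
      have hB : -(u - a) ^ 2 / L ^ 2 = -(u ^ 2 + a ^ 2) / L ^ 2 + 2 * a * u / L ^ 2 := by
        ring
      rw [h1, h2, hA, hB, Real.exp_add, Real.exp_add, Real.cosh_eq]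
      ring
    have e2 : f m = c * (2 * Real.exp (-a ^ 2 / L ^ 2)) := by
      rw [hf, ← hcdef]
      have h1 : m - y1 = a := by rw [hmdef, hadef]; ring
      have h2 : m - y2 = -a := by rw [hmdef, hadef]; ring
      rw [h1, h2, show (-(-a) ^ 2 : ℝ) = -a ^ 2 by ring]
      ring
    have e3 : Real.exp (-a ^ 2 / L ^ 2) =
        Real.exp (u ^ 2 / L ^ 2) * Real.exp (-(u ^ 2 + a ^ 2) / L ^ 2) := by
      rw [← Real.exp_add]; congr 1; ring
    rw [e1, e2, e3, mul_le_mul_iff_right₀ hc]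
    have hE : 0 < Real.exp (-(u ^ 2 + a ^ 2) / L ^ 2) := Real.exp_pos _
    constructor
    · intro h; nlinarith
    · intro h; nlinarith
  constructor
  · -- global max → separation bound
    intro hmax
    by_contra hcon
    push_neg at hcon
    have hs2 : (0:ℝ) ≤ Real.sqrt 2 := Real.sqrt_nonneg 2
    have hsq : L ^ 2 < 2 * a ^ 2 := by
      have h1 : (Real.sqrt 2 * L) ^ 2 < (y2 - y1) ^ 2 := by
        apply sq_lt_sq' <;> nlinarith
      rw [mul_pow, Real.sq_sqrt (by norm_num : (0:ℝ) ≤ 2)] at h1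
      rw [hadef] at *
      nlinarith
    have ha2 : (0:ℝ) < a ^ 2 := by positivity
    have hvpos : 0 < L ^ 2 * (2 * a ^ 2 - L ^ 2) / (2 * a ^ 2) :=
      div_pos (by nlinarith) (by positivity)
    obtain ⟨u, hudef⟩ : ∃ u : ℝ, u = Real.sqrt (L ^ 2 * (2 * a ^ 2 - L ^ 2) / (2 * a ^ 2)) :=
      ⟨_, rfl⟩
    have hu : 0 < u := by rw [hudef]; exact Real.sqrt_pos.2 hvpos
    have hu2 : u ^ 2 = L ^ 2 * (2 * a ^ 2 - L ^ 2) / (2 * a ^ 2) := by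
      rw [hudef]; exact Real.sq_sqrt hvpos.le
    have hkey := (key u).1 (hmax (m + u))
    have hx1 : u ^ 2 / L ^ 2 = (2 * a ^ 2 - L ^ 2) / (2 * a ^ 2) := by
      rw [hu2]; field_simp
    have hx0 : 0 < u ^ 2 / L ^ 2 := div_pos (pow_pos hu 2) hL2
    have hx1' : u ^ 2 / L ^ 2 < 1 := by
      rw [hx1, div_lt_one (by positivity)]; nlinarith
    have hexplt := aux_exp_lt_inv_one_sub hx0 hx1'
    have hinv : (1 - u ^ 2 / L ^ 2)⁻¹ = 2 * a ^ 2 / L ^ 2 := by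
      rw [hx1, show (1 : ℝ) - (2 * a ^ 2 - L ^ 2) / (2 * a ^ 2) = L ^ 2 / (2 * a ^ 2) by
        field_simp; ring, inv_div]
    have hcosh : 2 * a ^ 2 / L ^ 2 ≤ Real.cosh (2 * a * u / L ^ 2) := by
      have h1 := aux_one_add_sq_div_two_le_cosh (2 * a * u / L ^ 2)
      have h2 : 1 + (2 * a * u / L ^ 2) ^ 2 / 2 = 2 * a ^ 2 / L ^ 2 := by
        rw [show (2 * a * u / L ^ 2) ^ 2 = (2 * a / L ^ 2) ^ 2 * u ^ 2 by ring, hu2]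
        field_simp
        ring
      linarith
    rw [hinv] at hexplt
    linarith
  · -- separation bound → global max
    intro hsep x
    have hsq : 2 * a ^ 2 ≤ L ^ 2 := by
      have h1 : (y2 - y1) ^ 2 ≤ (Real.sqrt 2 * L) ^ 2 := by
        apply sq_le_sq' <;> nlinarith [Real.sqrt_nonneg 2]
      rw [mul_pow, Real.sq_sqrt (by norm_num : (0:ℝ) ≤ 2)] at h1
      rw [hadef]; nlinarith
    have hx : x = m + (x - m) := by ring
    rw [hx]
    apply (key (x - m)).2
    calc Real.cosh (2 * a * (x - m) / L ^ 2)
        ≤ Real.exp ((2 * a * (x - m) / L ^ 2) ^ 2 / 2) := Real.cosh_le_exp_half_sq _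
      _ ≤ Real.exp ((x - m) ^ 2 / L ^ 2) := by
          apply Real.exp_le_exp.2
          rw [show (2 * a * (x - m) / L ^ 2) ^ 2 / 2
              = 2 * a ^ 2 * (x - m) ^ 2 / (L ^ 2 * L ^ 2) by ring]
          rw [div_le_div_iff₀ (by positivity) hL2]
          nlinarith [mul_nonneg (mul_nonneg (sub_nonneg.2 hsq) (sq_nonneg (x - m))) hL2.le]
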